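/- Let 𝒜, ℬ be numerical semigroups, d ∈ ℤ, and f a polynomial over a field k of characteristic 0 vanishing on Z_d(ℬ,𝒜). Then there exist b₁,…,b_n ∈ ℬ such that (1) d + b_i ∈ 𝒜 and f(b_i) ≠ 0 for all i, (2) b_i ∈ Z_{−b_j}(ℬ,𝒜) for i ≠ j, and (3) f lies in the ideal I_{−b₁}(ℬ,𝒜) + … + I_{−b_n}(ℬ,𝒜). -/

import Mathlib

/-- A numerical semigroup: an additive submonoid of `ℕ` with finite complement. -/
def IsNumericalSemigroup (A : AddSubmonoid ℕ) : Prop :=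
  ((A : Set ℕ)ᶜ).Finite

/-- `Zset d B A = {i ∈ B | i + d ∉ A}`, viewing `A, B ⊆ ℕ ⊆ ℤ`. -/
def Zset (d : ℤ) (B A : AddSubmonoid ℕ) : Set ℕ :=
  {i : ℕ | i ∈ B ∧ ¬ ∃ a ∈ A, (i : ℤ) + d = (a : ℤ)}


open Polynomial

-- two-set decomposition
lemma two_set {k : Type*} [Field k] (S T : Finset k) (f : Polynomial k)
    (hf : ∀ c ∈ S, c ∈ T → f.eval c = 0) :
    ∃ g h : Polynomial k, (∀ c ∈ S, g.eval c = 0) ∧ (∀ c ∈ T, h.eval c = 0) ∧ f = g + h := by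
  classical
  set p : Polynomial k := ∏ s ∈ S \ T, (X - C s) with hp
  set q : Polynomial k := ∏ t ∈ T, (X - C t) with hq
  have hcop : IsCoprime p q := by
    apply IsCoprime.prod_left
    intro s hs
    apply IsCoprime.prod_right
    intro t ht
    apply Polynomial.isCoprime_X_sub_C_of_isUnit_sub
    have : s ≠ t := by
      rintro rfl
      exact (Finset.mem_sdiff.1 hs).2 ht
    exact (sub_ne_zero_of_ne this).isUnit
  obtain ⟨u, v, huv⟩ := hcop
  refine ⟨u * p * f, v * q * f, ?_, ?_, ?_⟩
  · intro c hc
    by_cases hcT : c ∈ T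
    · simp [hf c hc hcT]
    · have : p.eval c = 0 := by
        rw [hp, eval_prod]
        exact Finset.prod_eq_zero (Finset.mem_sdiff.2 ⟨hc, hcT⟩) (by simp)
      simp [this]
  · intro c hc
    have : q.eval c = 0 := by
      rw [hq, eval_prod]
      exact Finset.prod_eq_zero hc (by simp)
    simp [this]
  · have : (u * p + v * q) * f = f := by rw [huv, one_mul]
    linear_combination -this

lemma sum_decomp {k : Type*} [Field k] : ∀ (n : ℕ) (S : Fin (n+1) → Finset k) (f : Polynomial k),
    (∀ c, (∀ i, c ∈ S i) → f.eval c = 0) →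
    ∃ g : Fin (n+1) → Polynomial k, (∀ i, ∀ c ∈ S i, (g i).eval c = 0) ∧ f = ∑ i, g i := by
  intro n
  induction n with
  | zero =>
    intro S f hf
    refine ⟨fun _ => f, ?_, by simp⟩
    intro i c hc
    have : ∀ j : Fin 1, j = i := fun j => by omega
    exact hf c (fun j => (this j) ▸ hc)
  | succ n ih =>
    intro S f hf
    classical
    set T : Finset k := (S 1).filter (fun c => ∀ i : Fin (n+1), c ∈ S i.succ) with hT
    obtain ⟨g0, h, hg0, hh, hsum⟩ := two_set (S 0) T f (by
      intro c hc hcT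
      apply hf
      intro i
      refine Fin.cases hc (fun j => ?_) i
      exact (Finset.mem_filter.1 hcT).2 j)
    obtain ⟨g', hg', hsum'⟩ := ih (fun i => S i.succ) h (by
      intro c hc
      apply hh
      rw [hT, Finset.mem_filter]
      exact ⟨hc 0, hc⟩)
    refine ⟨Fin.cases g0 g', ?_, ?_⟩
    · intro i
      refine Fin.cases ?_ (fun j => ?_) i
      · simpa using hg0
      · simpa using hg' j
    · rw [Fin.sum_univ_succ]
      simpa using hsum.trans (by rw [hsum'])


lemma sum_decomp' {k : Type*} [Field k] (n : ℕ) (hn : 0 < n) (S : Fin n → Finset k) (f : Polynomial k)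
    (h : ∀ c, (∀ i, c ∈ S i) → f.eval c = 0) :
    ∃ g : Fin n → Polynomial k, (∀ i, ∀ c ∈ S i, (g i).eval c = 0) ∧ f = ∑ i, g i := by
  obtain ⟨m, rfl⟩ := Nat.exists_eq_succ_of_ne_zero hn.ne'
  exact sum_decomp m S f h

theorem poly_local_projectivity_decomposition (k : Type*) [Field k] [CharZero k]
    (A B : AddSubmonoid ℕ)
    (hA : IsNumericalSemigroup A) (hB : IsNumericalSemigroup B)
    (d : ℤ) (f : Polynomial k)
    (hf : ∀ b ∈ Zset d B A, f.eval (b : k) = 0) :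
    ∃ (n : ℕ) (b : Fin n → ℕ),
      (∀ i, b i ∈ B) ∧
      (∀ i, (∃ a ∈ A, (b i : ℤ) + d = (a : ℤ)) ∧ f.eval (b i : k) ≠ 0) ∧
      (∀ i j, i ≠ j → b i ∈ Zset (-(b j : ℤ)) B A) ∧
      (∃ g : Fin n → Polynomial k,
        (∀ i, ∀ c ∈ Zset (-(b i : ℤ)) B A, (g i).eval (c : k) = 0) ∧
        f = ∑ i, g i) := by
  classical
  -- bound for complement of A
  obtain ⟨NA, hNA⟩ : ∃ N : ℕ, ∀ x : ℕ, N ≤ x → x ∈ A := by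
    refine ⟨hA.toFinset.sup id + 1, ?_⟩
    intro x hx
    by_contra hxA
    have hmem : x ∈ hA.toFinset := (Set.Finite.mem_toFinset hA).2 hxA
    have := Finset.le_sup (f := id) hmem
    simp only [id] at this
    omega
  set C : Set ℕ := {i | i ∈ B ∧ f.eval (i : k) ≠ 0} with hC
  set M : Set ℕ := {m | m ∈ C ∧ ∀ m' ∈ C, (∃ a ∈ A, m' + a = m) → m' = m} with hM
  have hcov : ∀ i, i ∈ C → ∃ m ∈ M, ∃ a ∈ A, m + a = i := by
    intro i
    induction i using Nat.strong_induction_on with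
    | _ i ih =>
      intro hi
      by_cases hiM : ∀ m' ∈ C, (∃ a ∈ A, m' + a = i) → m' = i
      · exact ⟨i, ⟨hi, hiM⟩, 0, A.zero_mem, by omega⟩
      · push_neg at hiM
        obtain ⟨m', hm'C, ⟨a, haA, hma⟩, hne⟩ := hiM
        obtain ⟨m, hmM, a', ha'A, hma'⟩ := ih m' (by omega) hm'C
        exact ⟨m, hmM, a' + a, A.add_mem ha'A haA, by omega⟩
  have hMfin : M.Finite := by
    rcases Set.eq_empty_or_nonempty M with h | ⟨m0, hm0⟩
    · simp [h]
    · apply Set.Finite.subset (Set.finite_le_nat (m0 + NA))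
      intro m hm
      by_contra hgt
      simp only [Set.mem_setOf_eq, not_le] at hgt
      have := hm.2 m0 hm0.1 ⟨m - m0, hNA _ (by omega), by omega⟩
      omega
  have hZfin : ∀ m : ℕ, (Zset (-(m : ℤ)) B A).Finite := by
    intro m
    apply Set.Finite.subset (Set.finite_le_nat (m + NA))
    intro c hc
    by_contra h
    simp only [Set.mem_setOf_eq, not_le] at h
    exact hc.2 ⟨c - m, hNA _ (by omega), by omega⟩
  by_cases hf0 : f = 0
  · refine ⟨0, Fin.elim0, fun i => i.elim0, fun i => i.elim0, fun i => i.elim0, Fin.elim0,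
      fun i => i.elim0, by simp [hf0]⟩
  -- C is nonempty, hence M is nonempty
  have hBinf : (↑B : Set ℕ).Infinite := by
    have := hB.infinite_compl
    rwa [compl_compl] at this
  have hroots : {i : ℕ | f.eval (i : k) = 0}.Finite := by
    have h1 : {x : k | f.IsRoot x}.Finite := Polynomial.finite_setOf_isRoot hf0
    have : {i : ℕ | f.eval (i : k) = 0} = (fun i : ℕ => (i : k)) ⁻¹' {x : k | f.IsRoot x} := rfl
    rw [this]
    exact Set.Finite.preimage (Set.injOn_of_injective Nat.cast_injective) h1
  have hCne : C.Nonempty := by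
    obtain ⟨i, hiB, hif⟩ := (hBinf.diff hroots).nonempty
    exact ⟨i, hiB, hif⟩
  obtain ⟨i0, hi0⟩ := hCne
  obtain ⟨m0, hm0M, -⟩ := hcov i0 hi0
  set Mf := hMfin.toFinset with hMf
  have hcard : 0 < Mf.card := Finset.card_pos.2 ⟨m0, hMfin.mem_toFinset.2 hm0M⟩
  set e := Mf.equivFin with he
  set b : Fin Mf.card → ℕ := fun i => ((e.symm i : Mf) : ℕ) with hb
  have hbM : ∀ i, b i ∈ M := fun i => hMfin.mem_toFinset.1 (e.symm i).2
  have hbinj : Function.Injective b := by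
    intro i j hij
    have : e.symm i = e.symm j := Subtype.ext hij
    simpa using congrArg e this
  have hbsurj : ∀ m ∈ M, ∃ i, b i = m := by
    intro m hm
    exact ⟨e ⟨m, hMfin.mem_toFinset.2 hm⟩, by simp [hb]⟩
  have hbB : ∀ i, b i ∈ B := fun i => (hbM i).1.1
  have hbf : ∀ i, f.eval (b i : k) ≠ 0 := fun i => (hbM i).1.2
  refine ⟨Mf.card, b, hbB, ?_, ?_, ?_⟩
  · intro i
    refine ⟨?_, hbf i⟩
    by_contra h
    exact hbf i (hf (b i) ⟨hbB i, h⟩)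
  · intro i j hij
    refine ⟨hbB i, ?_⟩
    rintro ⟨a, haA, heq⟩
    have h2 : b j + a = b i := by omega
    exact hij (hbinj ((hbM i).2 (b j) (hbM j).1 ⟨a, haA, h2⟩).symm)
  · set S : Fin Mf.card → Finset k :=
      fun i => (hZfin (b i)).toFinset.image (fun m : ℕ => (m : k)) with hS
    obtain ⟨g, hg1, hg2⟩ := sum_decomp' Mf.card hcard S f (by
      intro c hc
      obtain ⟨m0, hm0, rfl⟩ := Finset.mem_image.1 (hc ⟨0, hcard⟩)
      have hm0Z : ∀ i, m0 ∈ Zset (-(b i : ℤ)) B A := by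
        intro i
        obtain ⟨m1, hm1, hcast⟩ := Finset.mem_image.1 (hc i)
        have : m1 = m0 := Nat.cast_injective hcast
        rw [← this]
        exact (hZfin (b i)).mem_toFinset.1 hm1
      by_contra hfc
      have hm0C : m0 ∈ C := ⟨(hm0Z ⟨0, hcard⟩).1, hfc⟩
      obtain ⟨m, hmM, a, haA, hma⟩ := hcov m0 hm0C
      obtain ⟨i, rfl⟩ := hbsurj m hmM
      exact (hm0Z i).2 ⟨a, haA, by omega⟩)
    refine ⟨g, ?_, hg2⟩
    intro i c hc
    exact hg1 i (c : k) (Finset.mem_image.2 ⟨c, (hZfin (b i)).mem_toFinset.2 hc, rfl⟩)
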